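/- Let d ≥ 1, let (Ω, 𝔪) be a measure space, and let u, v : Ω → EuclideanSpace ℝ (Fin d) be such that for all k, l ∈ Fin d the function ω ↦ (u ω) k · (v ω) l is integrable with respect to 𝔪. Let λ, μ ∈ ℝ with μ > 0 and λ + μ > 0. Define A : Matrix (Fin d) (Fin d) ℝ by A k l := −∫ (u ω) k · (v ω) l d𝔪, assume A is symmetric (A = Aᵀ), set γ := −∫ ⟪u ω, v ω⟫ d𝔪, and set K := (λ + μ) • A + (μ·γ) • (1 : Matrix (Fin d) (Fin d) ℝ). Then K is positive-definite if and only if for every ξ ∈ EuclideanSpace ℝ (Fin d) with ‖ξ‖ = 1 one has ∫ ⟪u ω, ξ⟫·⟪v ω, ξ⟫ d𝔪 < (−μ/(λ + μ)) · ∫ ⟪u ω, v ω⟫ d𝔪. -/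

import Mathlib

open RealInnerProductSpace Matrix MeasureTheory

theorem stmt_9 (d : ℕ) (hd : 1 ≤ d) {Ω : Type*} [MeasurableSpace Ω] (𝔪 : Measure Ω)
    (u v : Ω → EuclideanSpace ℝ (Fin d))
    (hint : ∀ k l : Fin d, Integrable (fun ω => u ω k * v ω l) 𝔪)
    (lam mu : ℝ) (hmu : 0 < mu) (hlm : 0 < lam + mu)
    (A : Matrix (Fin d) (Fin d) ℝ)
    (hA : ∀ k l : Fin d, A k l = -∫ ω, u ω k * v ω l ∂𝔪)
    (hAsym : A = Aᵀ)
    (γ : ℝ) (hγ : γ = -∫ ω, ⟪u ω, v ω⟫ ∂𝔪)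
    (K : Matrix (Fin d) (Fin d) ℝ)
    (hK : K = (lam + mu) • A + (mu * γ) • (1 : Matrix (Fin d) (Fin d) ℝ)) :
    K.PosDef ↔ ∀ ξ : EuclideanSpace ℝ (Fin d), ‖ξ‖ = 1 →
      (∫ ω, ⟪u ω, ξ⟫ * ⟪v ω, ξ⟫ ∂𝔪) < (-mu / (lam + mu)) * ∫ ω, ⟪u ω, v ω⟫ ∂𝔪 := by
  set J : ℝ := ∫ ω, ⟪u ω, v ω⟫ ∂𝔪 with hJ
  -- expansion of the integral of products of inner products
  have hprod : ∀ ξ : EuclideanSpace ℝ (Fin d),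
      (∫ ω, ⟪u ω, ξ⟫ * ⟪v ω, ξ⟫ ∂𝔪)
        = ∑ k, ∑ l, (ξ k * ξ l) * ∫ ω, u ω k * v ω l ∂𝔪 := by
    intro ξ
    have h1 : ∀ ω, ⟪u ω, ξ⟫ * ⟪v ω, ξ⟫
        = ∑ k, ∑ l, (ξ k * ξ l) * (u ω k * v ω l) := by
      intro ω
      simp only [PiLp.inner_apply, RCLike.inner_apply, conj_trivial]
      rw [Finset.sum_mul_sum]
      exact Finset.sum_congr rfl fun k _ => Finset.sum_congr rfl fun l _ => by ring
    simp only [h1]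
    rw [integral_finset_sum _ (fun k _ => integrable_finset_sum _
      (fun l _ => (hint k l).const_mul _))]
    refine Finset.sum_congr rfl fun k _ => ?_
    rw [integral_finset_sum _ (fun l _ => (hint k l).const_mul _)]
    exact Finset.sum_congr rfl fun l _ => integral_const_mul _ _
  -- quadratic form of A
  have hdotA : ∀ ξ : EuclideanSpace ℝ (Fin d),
      (ξ : Fin d → ℝ) ⬝ᵥ A *ᵥ (ξ : Fin d → ℝ)
        = -(∫ ω, ⟪u ω, ξ⟫ * ⟪v ω, ξ⟫ ∂𝔪) := by
    intro ξ
    rw [hprod, ← Finset.sum_neg_distrib]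
    simp only [dotProduct, Matrix.mulVec, Finset.mul_sum]
    refine Finset.sum_congr rfl fun k _ => ?_
    rw [← Finset.sum_neg_distrib]
    refine Finset.sum_congr rfl fun l _ => ?_
    rw [hA]
    ring
  have hdotself : ∀ ξ : EuclideanSpace ℝ (Fin d),
      (ξ : Fin d → ℝ) ⬝ᵥ (ξ : Fin d → ℝ) = ‖ξ‖ ^ 2 := by
    intro ξ
    rw [← real_inner_self_eq_norm_sq]
    simp [dotProduct, PiLp.inner_apply, RCLike.inner_apply, conj_trivial]
    rw [EuclideanSpace.norm_eq, Real.sq_sqrt (by positivity)]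
    simp [sq]
  have hquad : ∀ ξ : EuclideanSpace ℝ (Fin d),
      (ξ : Fin d → ℝ) ⬝ᵥ K *ᵥ (ξ : Fin d → ℝ)
        = (lam + mu) * (-(∫ ω, ⟪u ω, ξ⟫ * ⟪v ω, ξ⟫ ∂𝔪)) + mu * γ * ‖ξ‖ ^ 2 := by
    intro ξ
    rw [hK, Matrix.add_mulVec, dotProduct_add, Matrix.smul_mulVec,
      Matrix.smul_mulVec, Matrix.one_mulVec, dotProduct_smul, dotProduct_smul,
      smul_eq_mul, smul_eq_mul, hdotA, hdotself]
  have hAs : ∀ i j, A i j = A j i := fun i j => congrFun (congrFun hAsym i) j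
  have hKsym : K.IsHermitian := by
    show Kᴴ = K
    ext i j
    simp only [Matrix.conjTranspose_apply, star_trivial, hK, Matrix.add_apply,
      Matrix.smul_apply, Matrix.one_apply, smul_eq_mul]
    rw [hAs j i]
    by_cases h : i = j <;> simp [h, Matrix.one_apply, eq_comm]
  constructor
  · intro hpd ξ hξ
    have hξ0 : ξ ≠ 0 := by
      intro h; rw [h, norm_zero] at hξ; norm_num at hξ
    have h0 : ((ξ : Fin d → ℝ) : Fin d → ℝ) ≠ 0 := by
      intro h
      exact hξ0 (by ext k; exact congrFun h k)
    have := hpd.dotProduct_mulVec_pos h0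
    rw [star_trivial, hquad ξ, hξ] at this
    rw [div_mul_eq_mul_div, lt_div_iff₀ hlm]
    rw [hγ] at this
    nlinarith [this]
  · intro h
    refine Matrix.PosDef.of_dotProduct_mulVec_pos hKsym fun {x} hx => ?_
    set y : EuclideanSpace ℝ (Fin d) := WithLp.toLp 2 x with hy
    have hy0 : y ≠ 0 := by
      intro h; apply hx; have := congrArg WithLp.ofLp h; simpa [hy] using this
    have hny : (0 : ℝ) < ‖y‖ := norm_pos_iff.mpr hy0
    set ξ : EuclideanSpace ℝ (Fin d) := ‖y‖⁻¹ • y with hξdef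
    have hξ1 : ‖ξ‖ = 1 := norm_smul_inv_norm hy0
    have hlt := h ξ hξ1
    have hscale : (∫ ω, ⟪u ω, ξ⟫ * ⟪v ω, ξ⟫ ∂𝔪)
        = (‖y‖⁻¹ * ‖y‖⁻¹) * ∫ ω, ⟪u ω, y⟫ * ⟪v ω, y⟫ ∂𝔪 := by
      rw [← integral_const_mul]
      refine integral_congr_ae (Filter.Eventually.of_forall fun ω => ?_)
      simp only [hξdef, real_inner_smul_right]
      ring
    rw [star_trivial, show x = y.ofLp from rfl, hquad y, hγ]
    rw [hscale, div_mul_eq_mul_div, lt_div_iff₀ hlm] at hlt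
    have hy2 : 0 < ‖y‖ ^ 2 := by positivity
    have h3 := mul_lt_mul_of_pos_right hlt hy2
    have hyne : ‖y‖ ≠ 0 := ne_of_gt hny
    have hinv : ‖y‖⁻¹ * ‖y‖⁻¹ * ‖y‖ ^ 2 = 1 := by
      rw [pow_two]
      field_simp
    have h4 : (‖y‖⁻¹ * ‖y‖⁻¹ * (∫ ω, ⟪u ω, y⟫ * ⟪v ω, y⟫ ∂𝔪) * (lam + mu)) * ‖y‖ ^ 2
        = (∫ ω, ⟪u ω, y⟫ * ⟪v ω, y⟫ ∂𝔪) * (lam + mu) := by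
      calc (‖y‖⁻¹ * ‖y‖⁻¹ * (∫ ω, ⟪u ω, y⟫ * ⟪v ω, y⟫ ∂𝔪) * (lam + mu)) * ‖y‖ ^ 2
          = (‖y‖⁻¹ * ‖y‖⁻¹ * ‖y‖ ^ 2) * ((∫ ω, ⟪u ω, y⟫ * ⟪v ω, y⟫ ∂𝔪) * (lam + mu)) := by
            ring
        _ = (∫ ω, ⟪u ω, y⟫ * ⟪v ω, y⟫ ∂𝔪) * (lam + mu) := by rw [hinv]; ring
    rw [h4] at h3
    nlinarith [h3]
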